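/- For every d ≥ 1 and μ ≥ 0, the cardinalities of nested Smolyak grids satisfy the recursion N(d+1,μ) = f(1)·N(d,μ) + Σ_{ℓ=1}^{μ} (f(ℓ+1) − f(ℓ))·N(d,μ−ℓ). -/

import Mathlib

/-- Multi-indices `i : Fin d → ℕ` with `i k ≥ 1` for all `k` and `∑ k, i k = d + μ`. -/
def smolyakIndices (d μ : ℕ) : Finset (Fin d → ℕ) :=
  (Fintype.piFinset fun _ => Finset.Icc 1 (d + μ)).filter fun i => ∑ k, i k = d + μ

/-- The Smolyak grid `Γ(d, μ)` based on the node sets `S`. -/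
noncomputable def smolyakGrid (S : ℕ → Finset ℝ) (d μ : ℕ) : Finset (Fin d → ℝ) :=
  (smolyakIndices d μ).biUnion fun i => Fintype.piFinset fun k => S (i k)

/-- `N(d, μ)`: the number of nodes in the Smolyak grid. -/
noncomputable def smolyakCard (S : ℕ → Finset ℝ) (d μ : ℕ) : ℕ :=
  (smolyakGrid S d μ).card

lemma mem_smolyakGrid {S : ℕ → Finset ℝ} {d μ : ℕ} {x : Fin d → ℝ} :
    x ∈ smolyakGrid S d μ ↔
      ∃ i : Fin d → ℕ, (∀ k, 1 ≤ i k) ∧ (∑ k, i k = d + μ) ∧ ∀ k, x k ∈ S (i k) := by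
  simp only [smolyakGrid, Finset.mem_biUnion, smolyakIndices, Finset.mem_filter,
    Fintype.mem_piFinset, Finset.mem_Icc]
  constructor
  · rintro ⟨i, ⟨hi, hsum⟩, hx⟩
    exact ⟨i, fun k => (hi k).1, hsum, hx⟩
  · rintro ⟨i, h1, hsum, hx⟩
    refine ⟨i, ⟨fun k => ⟨h1 k, ?_⟩, hsum⟩, hx⟩
    calc i k ≤ ∑ j, i j :=
          Finset.single_le_sum (fun j _ => Nat.zero_le _) (Finset.mem_univ k)
      _ = d + μ := hsum

lemma S_mono {S : ℕ → Finset ℝ} (hS : ∀ k, 1 ≤ k → S k ⊆ S (k + 1)) :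
    ∀ {a b : ℕ}, 1 ≤ a → a ≤ b → S a ⊆ S b := by
  intro a b ha hab
  induction hab with
  | refl => exact subset_rfl
  | step h ih => exact ih.trans (hS _ (ha.trans h))

lemma smolyakGrid_subset_succ {S : ℕ → Finset ℝ} (hS : ∀ k, 1 ≤ k → S k ⊆ S (k + 1))
    {d : ℕ} (hd : 1 ≤ d) (μ : ℕ) :
    smolyakGrid S d μ ⊆ smolyakGrid S d (μ + 1) := by
  classical
  intro x hx
  rw [mem_smolyakGrid] at hx ⊢
  obtain ⟨i, h1, hsum, hx⟩ := hx
  set k0 : Fin d := ⟨0, hd⟩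
  refine ⟨Function.update i k0 (i k0 + 1), fun k => ?_, ?_, fun k => ?_⟩
  · rcases eq_or_ne k k0 with rfl | h
    · simp
    · simpa [Function.update_apply, h] using h1 k
  · rw [Finset.sum_update_of_mem (Finset.mem_univ k0)]
    have := Finset.add_sum_erase Finset.univ i (Finset.mem_univ k0)
    have h2 : Finset.univ \ {k0} = Finset.univ.erase k0 := by
      ext; simp [Finset.mem_erase, and_comm]
    rw [h2]
    omega
  · rcases eq_or_ne k k0 with rfl | h
    · simpa using hS (i k0) (h1 k0) (hx k0)
    · simpa [Function.update_apply, h] using hx k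

lemma smolyakGrid_mono {S : ℕ → Finset ℝ} (hS : ∀ k, 1 ≤ k → S k ⊆ S (k + 1))
    {d : ℕ} (hd : 1 ≤ d) {μ μ' : ℕ} (h : μ ≤ μ') :
    smolyakGrid S d μ ⊆ smolyakGrid S d μ' := by
  induction h with
  | refl => exact subset_rfl
  | step _ ih => exact ih.trans (smolyakGrid_subset_succ hS hd _)

/-- The "new nodes" at level `ℓ`. -/
noncomputable def smolyakT (S : ℕ → Finset ℝ) (ℓ : ℕ) : Finset ℝ :=
  if ℓ = 0 then S 1 else S (ℓ + 1) \ S ℓ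

lemma smolyakT_subset {S : ℕ → Finset ℝ} (hS : ∀ k, 1 ≤ k → S k ⊆ S (k + 1))
    {j ℓ : ℕ} (h : j ≤ ℓ) : smolyakT S j ⊆ S (ℓ + 1) := by
  have h1 : smolyakT S j ⊆ S (j + 1) := by
    unfold smolyakT; split
    · subst ‹j = 0›; exact subset_rfl
    · exact Finset.sdiff_subset
  exact h1.trans (S_mono hS (by omega) (by omega))

lemma exists_smolyakT {S : ℕ → Finset ℝ} {ℓ : ℕ} {a : ℝ} (ha : a ∈ S (ℓ + 1)) :
    ∃ j ≤ ℓ, a ∈ smolyakT S j := by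
  classical
  induction ℓ with
  | zero => exact ⟨0, le_rfl, by simpa [smolyakT] using ha⟩
  | succ n ih =>
    by_cases h : a ∈ S (n + 1)
    · obtain ⟨j, hj, hj2⟩ := ih h
      exact ⟨j, by omega, hj2⟩
    · exact ⟨n + 1, le_rfl, by simp [smolyakT, Finset.mem_sdiff, ha, h]⟩

lemma smolyakT_disjoint {S : ℕ → Finset ℝ} (hS : ∀ k, 1 ≤ k → S k ⊆ S (k + 1))
    {j ℓ : ℕ} (h : j < ℓ) : Disjoint (smolyakT S j) (smolyakT S ℓ) := by
  rw [Finset.disjoint_left]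
  intro a haj hal
  have h1 : a ∈ S ℓ := by
    have := smolyakT_subset hS (show j ≤ ℓ - 1 by omega) haj
    have he : ℓ - 1 + 1 = ℓ := by omega
    rwa [he] at this
  have : ℓ ≠ 0 := by omega
  simp only [smolyakT, if_neg this, Finset.mem_sdiff] at hal
  exact hal.2 h1

lemma cons_injective {d : ℕ} :
    Function.Injective (fun p : ℝ × (Fin d → ℝ) => Fin.cons p.1 p.2 : _ → Fin (d + 1) → ℝ) := by
  rintro ⟨a, y⟩ ⟨b, z⟩ h
  simp only [Prod.mk.injEq]
  constructor
  · have := congrFun h 0; simpa using this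
  · funext k
    have := congrFun h k.succ; simpa using this

lemma smolyakGrid_succ_eq {S : ℕ → Finset ℝ} (hS : ∀ k, 1 ≤ k → S k ⊆ S (k + 1))
    {d : ℕ} (hd : 1 ≤ d) (μ : ℕ) :
    smolyakGrid S (d + 1) μ =
      (Finset.range (μ + 1)).biUnion fun ℓ =>
        ((smolyakT S ℓ) ×ˢ smolyakGrid S d (μ - ℓ)).image fun p => Fin.cons p.1 p.2 := by
  classical
  ext x
  simp only [Finset.mem_biUnion, Finset.mem_range, Finset.mem_image, Finset.mem_product]
  constructor
  · intro hx
    rw [mem_smolyakGrid] at hx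
    obtain ⟨i, h1, hsum, hx⟩ := hx
    rw [Fin.sum_univ_succ] at hsum
    have htail_ge : d ≤ ∑ j : Fin d, i j.succ := by
      calc d = ∑ _j : Fin d, 1 := by simp
        _ ≤ ∑ j : Fin d, i j.succ := Finset.sum_le_sum fun j _ => h1 j.succ
    have hi0 : 1 ≤ i 0 := h1 0
    set ℓ' := i 0 - 1 with hℓ'
    have hℓ'le : ℓ' ≤ μ := by omega
    have hx0 : x 0 ∈ S (ℓ' + 1) := by
      have : ℓ' + 1 = i 0 := by omega
      rw [this]; exact hx 0
    obtain ⟨j, hjℓ, hj⟩ := exists_smolyakT hx0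
    refine ⟨j, by omega, (x 0, Fin.tail x), ⟨hj, ?_⟩, by simp [Fin.cons_self_tail]⟩
    have htail : Fin.tail x ∈ smolyakGrid S d (μ - ℓ') := by
      rw [mem_smolyakGrid]
      refine ⟨fun k => i k.succ, fun k => h1 k.succ, ?_, fun k => hx k.succ⟩
      show ∑ k : Fin d, i k.succ = d + (μ - ℓ')
      omega
    exact smolyakGrid_mono hS hd (by omega : μ - ℓ' ≤ μ - j) htail
  · rintro ⟨ℓ, hℓ, ⟨a, y⟩, ⟨ha, hy⟩, rfl⟩
    rw [mem_smolyakGrid] at hy ⊢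
    obtain ⟨i, h1, hsum, hy⟩ := hy
    refine ⟨Fin.cons (ℓ + 1) i, fun k => ?_, ?_, fun k => ?_⟩
    · refine Fin.cases ?_ (fun j => ?_) k <;> simp [h1]
    · rw [Fin.sum_univ_succ]; simp only [Fin.cons_zero, Fin.cons_succ]
      omega
    · refine Fin.cases ?_ (fun j => ?_) k
      · simpa using smolyakT_subset hS le_rfl ha
      · simpa using hy j

/-- The recursion `N(d+1, μ) = f(1)·N(d, μ) + ∑_{ℓ=1}^{μ} (f(ℓ+1) - f(ℓ))·N(d, μ-ℓ)` for the
cardinalities of nested Smolyak grids. -/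
theorem smolyakCard_recursion
    (f : ℕ → ℕ) (hf_mono : ∀ k, 1 ≤ k → f k ≤ f (k + 1)) (hf_pos : ∀ k, 1 ≤ k → 1 ≤ f k)
    (S : ℕ → Finset ℝ) (hS_nested : ∀ k, 1 ≤ k → S k ⊆ S (k + 1))
    (hS_card : ∀ k, 1 ≤ k → (S k).card = f k)
    (d μ : ℕ) (hd : 1 ≤ d) :
    smolyakCard S (d + 1) μ =
      f 1 * smolyakCard S d μ +
        ∑ ℓ ∈ Finset.Icc 1 μ, (f (ℓ + 1) - f ℓ) * smolyakCard S d (μ - ℓ) := by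
  classical
  have hcardT : ∀ ℓ, (smolyakT S ℓ).card =
      if ℓ = 0 then f 1 else f (ℓ + 1) - f ℓ := by
    intro ℓ
    rcases Nat.eq_zero_or_pos ℓ with rfl | hℓ
    · simp [smolyakT, hS_card 1 le_rfl]
    · have hne : ℓ ≠ 0 := by omega
      simp only [smolyakT, if_neg hne]
      rw [Finset.card_sdiff_of_subset (hS_nested ℓ hℓ), hS_card _ (by omega), hS_card _ hℓ]
  have hkey : smolyakCard S (d + 1) μ =
      ∑ ℓ ∈ Finset.range (μ + 1), (smolyakT S ℓ).card * smolyakCard S d (μ - ℓ) := by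
    rw [smolyakCard, smolyakGrid_succ_eq hS_nested hd]
    rw [Finset.card_biUnion]
    · refine Finset.sum_congr rfl fun ℓ _ => ?_
      rw [Finset.card_image_of_injective _ cons_injective, Finset.card_product]
      rfl
    · intro ℓ hℓ ℓ' hℓ' hne
      have hdisj : Disjoint (smolyakT S ℓ) (smolyakT S ℓ') := by
        rcases Nat.lt_or_ge ℓ ℓ' with h | h
        · exact smolyakT_disjoint hS_nested h
        · exact (smolyakT_disjoint hS_nested (by omega)).symm
      rw [Function.onFun, Finset.disjoint_left]
      rintro x hx hx'
      simp only [Finset.mem_image, Finset.mem_product] at hx hx'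
      obtain ⟨⟨a, y⟩, ⟨ha, _⟩, rfl⟩ := hx
      obtain ⟨⟨b, z⟩, ⟨hb, _⟩, heq⟩ := hx'
      have hab : b = a := by have := congrFun heq 0; simpa using this
      exact Finset.disjoint_left.mp hdisj ha (hab ▸ hb)
  rw [hkey, Finset.sum_range_succ']
  have h0 : (smolyakT S 0).card * smolyakCard S d (μ - 0) = f 1 * smolyakCard S d μ := by
    rw [hcardT]; simp
  rw [h0, add_comm]
  congr 1
  rw [← Finset.Ico_add_one_right_eq_Icc, Finset.sum_Ico_eq_sum_range]
  have hμ : μ + 1 - 1 = μ := by omega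
  rw [hμ]
  refine Finset.sum_congr rfl fun i _ => ?_
  have h1 : ¬(i + 1 = 0) := by omega
  rw [hcardT, if_neg h1, Nat.add_comm 1 i]
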